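/- Let K ≥ 3 be an odd integer and a, b, M nonnegative reals with a > 0, b·(K−1) < 2a, and a+b ≤ M ≤ 2a+b. Then (K−1)(2a+b)/(2a) − (K−1)·M/(2a) ≤ 3·((K−1)/2 − (K−1)·M/(2(2a+b))). -/

import Mathlib

/-- Odd-`K` order optimality, second memory regime: the achievable load
`(K−1)(2a+b)/(2a) − (K−1)M/(2a)` is at most `3` times the cut-set bound. -/
theorem stmt_11 (K : ℕ) (hK : 3 ≤ K) (hodd : Odd K) (a b M : ℝ) (ha : 0 < a) (hb : 0 ≤ b)
    (hM : 0 ≤ M) (hreg : b * ((K : ℝ) - 1) < 2 * a) (hMlb : a + b ≤ M) (hMub : M ≤ 2 * a + b) :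
    ((K : ℝ) - 1) * (2 * a + b) / (2 * a) - ((K : ℝ) - 1) * M / (2 * a) ≤
      3 * (((K : ℝ) - 1) / 2 - ((K : ℝ) - 1) * M / (2 * (2 * a + b))) := by
  have hK3 : (3 : ℝ) ≤ (K : ℝ) := by exact_mod_cast hK
  have hc : (2 : ℝ) ≤ (K : ℝ) - 1 := by linarith
  have hba : b < a := by nlinarith
  have hab : 0 < 2 * a + b := by linarith
  rw [div_sub_div _ _ (by positivity) (by positivity)]
  -- everything over common denominators
  have h1 : (0:ℝ) ≤ 2 * a + b - M := by linarith
  have h2 : 2 * a + b - M ≤ a := by linarith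
  rw [div_le_iff₀ (by positivity)]
  field_simp
  nlinarith [mul_nonneg (sub_nonneg.2 hc) h1, mul_nonneg h1 (le_of_lt (sub_pos.2 hba)),
    mul_nonneg (mul_nonneg (sub_nonneg.2 hc) h1) (le_of_lt (sub_pos.2 hba)), ha.le, hab.le]
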